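/- Let f : ℝ^d → ℝ be continuously differentiable and S = {θ ∈ ℝ^d : ∇f(θ) = 0}. Suppose there exists an open set V ⊇ S such that for every compact Q ⊂ V and every a ∈ f(Q) there exist δ ∈ (0,1], μ ∈ (1,2], M ∈ [1,∞) with |f(θ) − a| ≤ M‖∇f(θ)‖^μ for all θ ∈ Q satisfying |f(θ) − a| ≤ δ. Then the same conclusion holds globally: for every compact Q ⊂ ℝ^d and every a ∈ f(Q) there exist δ̃ ∈ (0,1], μ̃ ∈ (1,2], M̃ ∈ [1,∞) such that |f(θ) − a| ≤ M̃‖∇f(θ)‖^{μ̃} for all θ ∈ Q with |f(θ) − a| ≤ δ̃. -/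

import Mathlib

open Metric Set

private lemma continuous_gradient_of_contDiff {d : ℕ}
    (f : EuclideanSpace ℝ (Fin d) → ℝ) (hf : ContDiff ℝ 1 f) :
    Continuous (gradient f) := by
  have h : Continuous (fderiv ℝ f) := hf.continuous_fderiv one_ne_zero
  exact (InnerProductSpace.toDual ℝ (EuclideanSpace ℝ (Fin d))).symm.continuous.comp h

/-- Appendix of the paper, cf. Remark 1.2: if the
Łojasiewicz-type gradient inequality of Assumption 1.3 holds locally on an open
neighborhood `V` of the set `S` of stationary points of `f`, then it holds
globally, for every compact subset of `ℝ^d`. -/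
theorem lojasiewicz_local_to_global
    {d : ℕ}
    (f : EuclideanSpace ℝ (Fin d) → ℝ) (hf : ContDiff ℝ 1 f)
    (S : Set (EuclideanSpace ℝ (Fin d)))
    (hS : S = {x | gradient f x = 0})
    (V : Set (EuclideanSpace ℝ (Fin d))) (hV : IsOpen V) (hSV : S ⊆ V)
    (hloc : ∀ Q : Set (EuclideanSpace ℝ (Fin d)), IsCompact Q → Q ⊆ V →
      ∀ b ∈ f '' Q, ∃ δ μ M : ℝ,
        δ ∈ Set.Ioc (0 : ℝ) 1 ∧ μ ∈ Set.Ioc (1 : ℝ) 2 ∧ 1 ≤ M ∧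
        ∀ x ∈ Q, |f x - b| ≤ δ → |f x - b| ≤ M * ‖gradient f x‖ ^ μ) :
    ∀ Q : Set (EuclideanSpace ℝ (Fin d)), IsCompact Q →
      ∀ b ∈ f '' Q, ∃ δ μ M : ℝ,
        δ ∈ Set.Ioc (0 : ℝ) 1 ∧ μ ∈ Set.Ioc (1 : ℝ) 2 ∧ 1 ≤ M ∧
        ∀ x ∈ Q, |f x - b| ≤ δ → |f x - b| ≤ M * ‖gradient f x‖ ^ μ := by
  intro Q hQ b hb
  have hgrad : Continuous (gradient f) := continuous_gradient_of_contDiff f hf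
  -- stationary points inside Q
  set T : Set (EuclideanSpace ℝ (Fin d)) := Q ∩ {x | gradient f x = 0} with hT
  have hTc : IsCompact T :=
    hQ.inter_right (isClosed_eq hgrad continuous_const)
  have hTV : T ⊆ V := fun x hx => hSV (by rw [hS]; exact hx.2)
  obtain ⟨ε, hε, hεV⟩ := hTc.exists_thickening_subset_open hV hTV
  -- the near part
  set Q' : Set (EuclideanSpace ℝ (Fin d)) := Q ∩ cthickening (ε/2) T with hQ'
  have hQ'c : IsCompact Q' := hQ.inter_right isClosed_cthickening
  have hQ'V : Q' ⊆ V := fun x hx =>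
    hεV (cthickening_subset_thickening' hε (by linarith) T hx.2)
  -- the far part
  set Qf : Set (EuclideanSpace ℝ (Fin d)) := Q \ thickening (ε/2) T with hQf
  have hQfc : IsCompact Qf := hQ.diff isOpen_thickening
  have hcover : ∀ x ∈ Q, x ∈ Q' ∨ x ∈ Qf := by
    intro x hx
    by_cases h : x ∈ thickening (ε/2) T
    · exact Or.inl ⟨hx, thickening_subset_cthickening _ _ h⟩
    · exact Or.inr ⟨hx, h⟩
  -- positive lower bound for the gradient norm on the far part
  have hm : ∃ m : ℝ, 0 < m ∧ ∀ x ∈ Qf, m ≤ ‖gradient f x‖ := by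
    rcases Qf.eq_empty_or_nonempty with h | h
    · exact ⟨1, one_pos, by simp [h]⟩
    · obtain ⟨x₀, hx₀, hmin⟩ := hQfc.exists_isMinOn h
        ((continuous_norm.comp hgrad).continuousOn)
      refine ⟨‖gradient f x₀‖, ?_, fun x hx => hmin hx⟩
      rw [norm_pos_iff]
      intro h0
      exact hx₀.2 (self_subset_thickening (by linarith) T ⟨hx₀.1, h0⟩)
  obtain ⟨m, hm0, hmle⟩ := hm
  -- bound on the near part
  have hnear : ∃ δ μ M : ℝ, δ ∈ Set.Ioc (0 : ℝ) 1 ∧ μ ∈ Set.Ioc (1 : ℝ) 2 ∧ 1 ≤ M ∧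
      ∀ x ∈ Q', |f x - b| ≤ δ → |f x - b| ≤ M * ‖gradient f x‖ ^ μ := by
    by_cases hbQ' : b ∈ f '' Q'
    · exact hloc Q' hQ'c hQ'V b hbQ'
    · -- b is at positive distance from f '' Q'
      have : ∃ δ₀ : ℝ, 0 < δ₀ ∧ ∀ x ∈ Q', δ₀ ≤ |f x - b| := by
        rcases Q'.eq_empty_or_nonempty with h | h
        · exact ⟨1, one_pos, by simp [h]⟩
        · obtain ⟨x₀, hx₀, hmin⟩ := hQ'c.exists_isMinOn h
            ((continuous_abs.comp ((hf.continuous.sub continuous_const))).continuousOn)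
          refine ⟨|f x₀ - b|, ?_, fun x hx => hmin hx⟩
          rw [abs_pos, sub_ne_zero]
          intro h0
          exact hbQ' ⟨x₀, hx₀, h0⟩
      obtain ⟨δ₀, hδ₀, hδ₀le⟩ := this
      refine ⟨min 1 (δ₀/2), 2, 1, ⟨lt_min one_pos (by linarith), min_le_left _ _⟩,
        ⟨one_lt_two, le_refl 2⟩, le_refl 1, fun x hx hle => absurd hle (not_le.mpr ?_)⟩
      calc min 1 (δ₀/2) ≤ δ₀/2 := min_le_right _ _
        _ < δ₀ := by linarith
        _ ≤ |f x - b| := hδ₀le x hx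
  obtain ⟨δ, μ, M, hδ, hμ, hM, hbound⟩ := hnear
  -- combine
  refine ⟨δ, μ, max M (m ^ μ)⁻¹, hδ, hμ, le_trans hM (le_max_left _ _), fun x hx hle => ?_⟩
  have hμ0 : (0:ℝ) ≤ μ := by linarith [hμ.1]
  have hmp : (0:ℝ) < m ^ μ := Real.rpow_pos_of_pos hm0 μ
  rcases hcover x hx with h | h
  · calc |f x - b| ≤ M * ‖gradient f x‖ ^ μ := hbound x h hle
      _ ≤ max M (m ^ μ)⁻¹ * ‖gradient f x‖ ^ μ := by
          apply mul_le_mul_of_nonneg_right (le_max_left _ _)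
          positivity
  · have h1 : m ^ μ ≤ ‖gradient f x‖ ^ μ :=
      Real.rpow_le_rpow (le_of_lt hm0) (hmle x h) hμ0
    calc |f x - b| ≤ δ := hle
      _ ≤ 1 := hδ.2
      _ = (m ^ μ)⁻¹ * m ^ μ := (inv_mul_cancel₀ (ne_of_gt hmp)).symm
      _ ≤ max M (m ^ μ)⁻¹ * ‖gradient f x‖ ^ μ := by
          apply mul_le_mul (le_max_right _ _) h1 (le_of_lt hmp)
          exact le_trans zero_le_one (le_trans hM (le_max_left _ _))
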